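/- Let A → B be an embedding of unital rings such that B is free as a right A-module. If M and N are left A-modules with Ann_A(N) ⊆ Ann_A(M) (i.e. M is weakly contained in N), then Ann_B(B ⊗_A N) ⊆ Ann_B(B ⊗_A M). -/

import Mathlib

open TensorProduct

noncomputable section

namespace Paper

universe u

section Induced

variable {A B : Type*} [Ring A] [Ring B] (f : A →+* B)
variable (M : Type*) [AddCommGroup M] [Module A M]

/-- The defining relations of the induced module `B ⊗_A M` along a ring map `f : A → B`,
inside `B ⊗[ℤ] M`. -/
def indRel : Submodule B (B ⊗[ℤ] M) :=
  Submodule.span B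
    {x | ∃ (b : B) (a : A) (m : M), x = (b * f a) ⊗ₜ[ℤ] m - b ⊗ₜ[ℤ] (a • m)}

/-- The induced module `B ⊗_A M` along a ring map `f : A → B`, realized as the quotient of
`B ⊗[ℤ] M` by the relations `(b * f a) ⊗ m = b ⊗ (a • m)`.  It carries its canonical left
`B`-module structure. -/
def Induced := (B ⊗[ℤ] M) ⧸ indRel f M

instance : AddCommGroup (Induced f M) :=
  inferInstanceAs (AddCommGroup ((B ⊗[ℤ] M) ⧸ indRel f M))

instance : Module B (Induced f M) :=
  inferInstanceAs (Module B ((B ⊗[ℤ] M) ⧸ indRel f M))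

/-- The canonical map `B × M → B ⊗_A M`. -/
def inducedMk (b : B) (m : M) : Induced f M :=
  Submodule.Quotient.mk (b ⊗ₜ[ℤ] m)

end Induced

end Paper

end

open Paper in
/-- weak containment is preserved by scalar extension along a ring embedding
`A → B` making `B` free as a right `A`-module. -/
theorem induced_annihilator_le_of_annihilator_le
    (A B : Type*) [Ring A] [Ring B] (f : A →+* B) (hf : Function.Injective f)
    (hfree : letI : Module Aᵐᵒᵖ B := Module.compHom B (RingHom.op f);
      Module.Free Aᵐᵒᵖ B)
    (M N : Type*) [AddCommGroup M] [Module A M] [AddCommGroup N] [Module A N]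
    (h : Module.annihilator A N ≤ Module.annihilator A M) :
    Module.annihilator B (Induced f N) ≤ Module.annihilator B (Induced f M) := by
  letI : Module Aᵐᵒᵖ B := Module.compHom B (RingHom.op f)
  haveI : Module.Free Aᵐᵒᵖ B := hfree
  classical
  set ι := Module.Free.ChooseBasisIndex Aᵐᵒᵖ B with hι
  set e : Module.Basis ι Aᵐᵒᵖ B := Module.Free.chooseBasis Aᵐᵒᵖ B with he
  have hsmul : ∀ (a : A) (x : B), (MulOpposite.op a) • x = x * f a := fun a x => rfl
  -- the coefficient map on B ⊗[ℤ] N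
  let φ₀ : B → N → (ι →₀ N) := fun c n =>
    (e.repr c).mapRange (fun a => a.unop • n) (by simp)
  have φ₀_apply : ∀ (c : B) (n : N) (i : ι), φ₀ c n i = (e.repr c i).unop • n :=
    fun c n i => Finsupp.mapRange_apply
  have φ₀_add_left : ∀ (c₁ c₂ : B) (n : N), φ₀ (c₁ + c₂) n = φ₀ c₁ n + φ₀ c₂ n := by
    intro c₁ c₂ n; ext i
    simp [φ₀_apply, add_smul]
  have φ₀_add_right : ∀ (c : B) (n₁ n₂ : N), φ₀ c (n₁ + n₂) = φ₀ c n₁ + φ₀ c n₂ := by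
    intro c n₁ n₂; ext i
    simp [φ₀_apply, smul_add]
  let Φ₂ : B → N →ₗ[ℤ] (ι →₀ N) := fun c =>
    (AddMonoidHom.mk' (φ₀ c) (φ₀_add_right c)).toIntLinearMap
  let Φ₁ : B →ₗ[ℤ] (N →ₗ[ℤ] (ι →₀ N)) :=
    (AddMonoidHom.mk' Φ₂ (by
      intro c₁ c₂; ext n; exact congrFun (congrArg _ (φ₀_add_left c₁ c₂ n)) _)).toIntLinearMap
  let Φ : B ⊗[ℤ] N →ₗ[ℤ] (ι →₀ N) := TensorProduct.lift Φ₁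
  have Φ_tmul : ∀ (c : B) (n : N), Φ (c ⊗ₜ[ℤ] n) = φ₀ c n := fun c n => rfl
  -- Φ kills the relations
  have hker : ∀ x ∈ indRel f N, Φ x = 0 := by
    have key : ∀ x ∈ indRel f N, ∀ c : B, Φ (c • x) = 0 := by
      intro x hx
      refine Submodule.span_induction ?_ ?_ ?_ ?_ hx
      · rintro x ⟨b₀, a, n, rfl⟩ c
        have hc : c • ((b₀ * f a) ⊗ₜ[ℤ] n - b₀ ⊗ₜ[ℤ] (a • n))
            = ((c * b₀) * f a) ⊗ₜ[ℤ] n - (c * b₀) ⊗ₜ[ℤ] (a • n) := by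
          rw [smul_sub, smul_tmul', smul_tmul', smul_eq_mul, smul_eq_mul, mul_assoc]
        rw [hc, map_sub, Φ_tmul, Φ_tmul]
        ext i
        have hrepr : e.repr ((c * b₀) * f a) = MulOpposite.op a • e.repr (c * b₀) := by
          rw [← hsmul a (c * b₀), map_smul]
        simp only [Finsupp.coe_sub, Pi.sub_apply, φ₀_apply, hrepr, Finsupp.coe_smul,
          Pi.smul_apply, Finsupp.coe_zero, Pi.zero_apply]
        rw [smul_eq_mul, MulOpposite.unop_mul, MulOpposite.unop_op, mul_smul, sub_self]
      · intro c; simp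
      · intro x y _ _ hx hy c
        rw [smul_add, map_add, hx c, hy c, add_zero]
      · intro b' x _ hx c
        rw [smul_smul]; exact hx (c * b')
    intro x hx
    simpa using key x hx 1
  intro b hb
  -- the coefficients of b * c annihilate N
  have hann : ∀ (c : B) (i : ι), (e.repr (b * c) i).unop ∈ Module.annihilator A N := by
    intro c i
    rw [Module.mem_annihilator]
    intro n
    have h0 : (b * c) ⊗ₜ[ℤ] n ∈ indRel f N := by
      have hz : b • inducedMk f N c n = 0 := Module.mem_annihilator.mp hb _
      have : Submodule.Quotient.mk (p := indRel f N) (b • (c ⊗ₜ[ℤ] n)) = 0 := by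
        rw [Submodule.Quotient.mk_smul]; exact hz
      rw [smul_tmul', smul_eq_mul] at this
      exact (Submodule.Quotient.mk_eq_zero _).mp this
    have := DFunLike.congr_fun (hker _ h0) i
    rw [Φ_tmul, φ₀_apply] at this
    simpa using this
  -- conclude
  rw [Module.mem_annihilator]
  intro x
  obtain ⟨y, rfl⟩ := Submodule.Quotient.mk_surjective _ x
  change (b • Submodule.Quotient.mk (p := indRel f M) y : (B ⊗[ℤ] M) ⧸ indRel f M) = 0
  rw [← Submodule.Quotient.mk_smul, Submodule.Quotient.mk_eq_zero]
  induction y using TensorProduct.induction_on with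
  | zero => simpa using Submodule.zero_mem _
  | tmul c m =>
      rw [smul_tmul', smul_eq_mul]
      have hbc : b * c = (e.repr (b * c)).sum fun i a => a • e i := by
        conv_lhs => rw [← e.linearCombination_repr (b * c)]
        rw [Finsupp.linearCombination_apply]
      rw [hbc, Finsupp.sum, sum_tmul]
      refine Submodule.sum_mem _ ?_
      intro i _
      set a : A := (e.repr (b * c) i).unop with ha
      have h1 : (e.repr (b * c) i) • e i = e i * f a := by
        rw [ha, ← hsmul a (e i), MulOpposite.op_unop]
      have h2 : a • m = 0 := Module.mem_annihilator.mp (h (hann c i)) m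
      have h3 : (e i * f a) ⊗ₜ[ℤ] m
          = (e i * f a) ⊗ₜ[ℤ] m - e i ⊗ₜ[ℤ] (a • m) := by
        rw [h2, tmul_zero, sub_zero]
      rw [h1, h3]
      exact Submodule.subset_span ⟨e i, a, m, rfl⟩
  | add y z hy hz => rw [smul_add]; exact Submodule.add_mem _ hy hz
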